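/- Let F be a field, A a central simple F-algebra, and L a finite field extension of F that splits A, i.e., L ⊗_F A is isomorphic as an L-algebra to a matrix algebra M_q(L). Then there exists a central simple F-algebra B such that: B is Brauer equivalent to A (there exist positive integers m, n with M_m(B) ≅ M_n(A) as F-algebras); dim_F(B) = (dim_F(L))²; and there is an injective F-algebra homomorphism ι : L → B whose image is a maximal commutative subalgebra of B, i.e., the centralizer of ι(L) in B equals ι(L). -/

import Mathlib

open scoped TensorProduct
open Matrix

universe u v w

section Lemmas

variable {F : Type*} [CommSemiring F]

lemma mySimple_of_ringEquiv {R S : Type*} [Ring R] [Ring S] (f : R ≃+* S)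
    [IsSimpleRing R] : IsSimpleRing S := by
  haveI : Nontrivial S := f.symm.toEquiv.nontrivial
  refine IsSimpleRing.of_eq_bot_or_eq_top fun I => ?_
  rcases IsSimpleOrder.eq_bot_or_eq_top (I.comap (f : R →+* S)) with h | h
  · left
    rw [eq_bot_iff]
    intro x hx
    have hm : f.symm x ∈ I.comap (f : R →+* S) := by
      rw [TwoSidedIdeal.mem_comap]
      simpa using hx
    rw [h, TwoSidedIdeal.mem_bot _] at hm
    have : x = f (f.symm x) := (f.apply_symm_apply x).symm
    rw [this, hm, map_zero]
    exact (TwoSidedIdeal.mem_bot _).2 rfl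
  · right
    apply TwoSidedIdeal.eq_top
    have : (1 : R) ∈ I.comap (f : R →+* S) := h ▸ TwoSidedIdeal.mem_top _
    rw [TwoSidedIdeal.mem_comap] at this
    simpa using this

lemma mySimple_of_matrix {n : Type*} [Fintype n] [DecidableEq n] [Nonempty n]
    {R : Type*} [Ring R] [Nontrivial R] [IsSimpleRing (Matrix n n R)] :
    IsSimpleRing R := by
  refine IsSimpleRing.of_eq_bot_or_eq_top fun I => ?_
  obtain ⟨i0⟩ := ‹Nonempty n›
  let J : TwoSidedIdeal (Matrix n n R) := TwoSidedIdeal.mk'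
    {M | ∀ i j, M i j ∈ I}
    (fun i j => by simpa using I.zero_mem)
    (fun hx hy i j => by simpa using I.add_mem (hx i j) (hy i j))
    (fun hx i j => by simpa using I.neg_mem (hx i j))
    (fun {x y} hy i j => by
      simpa [Matrix.mul_apply] using I.finsetSum_mem _ _ fun k _ => I.mul_mem_left _ _ (hy k j))
    (fun {x y} hx i j => by
      simpa [Matrix.mul_apply] using I.finsetSum_mem _ _ fun k _ => I.mul_mem_right _ _ (hx i k))
  have memJ : ∀ M : Matrix n n R, M ∈ J ↔ ∀ i j, M i j ∈ I := fun M =>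
    TwoSidedIdeal.mem_mk' _ _ _ _ _ _ M
  rcases IsSimpleOrder.eq_bot_or_eq_top J with h | h
  · left
    rw [eq_bot_iff]
    intro x hx
    have : (Matrix.of fun _ _ => x) ∈ J := (memJ _).2 fun i j => hx
    rw [h, TwoSidedIdeal.mem_bot _] at this
    have := congrFun (congrFun this i0) i0
    simpa using (TwoSidedIdeal.mem_bot _).2 this
  · right
    apply TwoSidedIdeal.eq_top
    have : (1 : Matrix n n R) ∈ J := h ▸ TwoSidedIdeal.mem_top _
    have := (memJ _).1 this i0 i0
    simpa using this

lemma myCentral_of_algEquiv {R S : Type*} [Ring R] [Ring S] [Algebra F R] [Algebra F S]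
    (f : R ≃ₐ[F] S) [Algebra.IsCentral F R] : Algebra.IsCentral F S := by
  constructor
  intro x hx
  rw [Subalgebra.mem_center_iff] at hx
  have hc : f.symm x ∈ Subalgebra.center F R := by
    rw [Subalgebra.mem_center_iff]
    intro g
    apply f.injective
    rw [_root_.map_mul, _root_.map_mul, f.apply_symm_apply]
    exact hx (f g)
  obtain ⟨c, hc'⟩ := Algebra.mem_bot.1 (Algebra.IsCentral.out hc)
  refine Algebra.mem_bot.2 ⟨c, ?_⟩
  have : f (f.symm x) = x := f.apply_symm_apply x
  rw [← this, ← hc', AlgEquiv.commutes]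

lemma myCentral_of_matrix {n : Type*} [Fintype n] [DecidableEq n] [Nonempty n]
    {R : Type*} [Ring R] [Algebra F R] [Algebra.IsCentral F (Matrix n n R)] :
    Algebra.IsCentral F R := by
  constructor
  intro x hx
  obtain ⟨i0⟩ := ‹Nonempty n›
  rw [Subalgebra.mem_center_iff] at hx
  have hd : (Matrix.diagonal fun _ => x) ∈ Subalgebra.center F (Matrix n n R) := by
    rw [Subalgebra.mem_center_iff]
    intro M
    ext i j
    simp [Matrix.mul_diagonal, Matrix.diagonal_mul, hx (M i j)]
  obtain ⟨c, hc⟩ := Algebra.mem_bot.1 (Algebra.IsCentral.out hd)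
  refine Algebra.mem_bot.2 ⟨c, ?_⟩
  have := congrFun (congrFun (congrArg (fun M : Matrix n n R => (M : n → n → R)) hc) i0) i0
  simpa [Matrix.algebraMap_matrix_apply] using this

end Lemmas



section Constr

variable {F : Type u} {A : Type v} {L : Type w} [Field F]
  [Ring A] [Algebra F A] [Field L] [Algebra F L]
variable (q : ℕ) (e : (L ⊗[F] A) ≃ₐ[L] Matrix (Fin q) (Fin q) L)

noncomputable def phi : A →ₐ[F] Matrix (Fin q) (Fin q) L :=
  (e.toAlgHom.restrictScalars F).comp (Algebra.TensorProduct.includeRight)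

noncomputable def chi : Aᵐᵒᵖ →ₐ[F] Matrix (Fin q) (Fin q) L :=
  ((Matrix.transposeAlgEquiv (Fin q) F L).symm.toAlgHom).comp (AlgHom.op (phi q e))

lemma chi_apply (x : Aᵐᵒᵖ) : chi q e x = (e (1 ⊗ₜ x.unop))ᵀ := rfl

@[nolint unusedArguments]
def V (_e : (L ⊗[F] A) ≃ₐ[L] Matrix (Fin q) (Fin q) L) : Type w := Fin q → L

instance : AddCommGroup (V q e) := inferInstanceAs (AddCommGroup (Fin q → L))
instance : Module L (V q e) := inferInstanceAs (Module L (Fin q → L))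
instance : Module F (V q e) := inferInstanceAs (Module F (Fin q → L))
instance : IsScalarTower F L (V q e) := inferInstanceAs (IsScalarTower F L (Fin q → L))
instance : SMulCommClass L F (V q e) := inferInstanceAs (SMulCommClass L F (Fin q → L))
instance [FiniteDimensional F L] : FiniteDimensional F (V q e) :=
  inferInstanceAs (FiniteDimensional F (Fin q → L))

noncomputable def act : Aᵐᵒᵖ →ₐ[F] Module.End L (V q e) :=
  ((Matrix.toLinAlgEquiv' : Matrix (Fin q) (Fin q) L ≃ₐ[L] _).toAlgHom.restrictScalars F).comp
    (chi q e)

noncomputable instance modV : Module Aᵐᵒᵖ (V q e) :=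
  Module.compHom _ (act q e).toRingHom

lemma smul_defV (x : Aᵐᵒᵖ) (v : V q e) : x • v = (chi q e x).mulVec v := rfl

lemma smul_defV' (x : Aᵐᵒᵖ) (v : V q e) : x • v = act q e x v := rfl

instance : IsScalarTower F Aᵐᵒᵖ (V q e) := by
  constructor
  intro f x v
  show (act q e (f • x)) v = f • (act q e x) v
  rw [_root_.map_smul]
  rfl

instance : SMulCommClass Aᵐᵒᵖ F (V q e) := by
  constructor
  intro x f v
  show (act q e x) (f • v) = f • (act q e x) v
  exact (act q e x).map_smul_of_tower f v


/-- The embedding of `L` into `End_{Aᵐᵒᵖ}(V)` by scalar multiplication. -/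
noncomputable def iota : L →ₐ[F] Module.End Aᵐᵒᵖ (V q e) where
  toFun l :=
    { toFun := fun v => l • v
      map_add' := fun v w => smul_add l v w
      map_smul' := fun x v => by
        show l • (x • v) = x • (l • v)
        rw [smul_defV', smul_defV']
        exact ((act q e x).map_smul l v).symm }
  map_one' := by ext v; exact one_smul L v
  map_mul' l l' := by ext v; exact mul_smul l l' v
  map_zero' := by ext v; exact zero_smul L v
  map_add' l l' := by ext v; exact add_smul l l' v
  commutes' f := by
    ext v
    show (algebraMap F L f) • v = f • v
    exact algebraMap_smul L f v

lemma iota_apply (l : L) (v : V q e) : iota q e l v = l • v := rfl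

lemma V_nontrivial (hq : 0 < q) : Nontrivial (V q e) := by
  refine ⟨⟨0, (fun _ => 1 : Fin q → L), fun h => ?_⟩⟩
  have := congrFun h ⟨0, hq⟩
  exact zero_ne_one this

lemma B0_nontrivial (hq : 0 < q) : Nontrivial (Module.End Aᵐᵒᵖ (V q e)) := by
  haveI := V_nontrivial q e hq
  obtain ⟨v, hv⟩ := exists_ne (0 : V q e)
  refine ⟨1, 0, fun h => hv ?_⟩
  have := congrArg (fun f : Module.End Aᵐᵒᵖ (V q e) => f v) h
  simpa using this

lemma B0_finiteDimensional [FiniteDimensional F L] :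
    FiniteDimensional F (Module.End Aᵐᵒᵖ (V q e)) := by
  let j : Module.End Aᵐᵒᵖ (V q e) →ₗ[F] (V q e →ₗ[F] V q e) :=
    { toFun := fun f => f.restrictScalars F
      map_add' := fun f g => rfl
      map_smul' := fun c f => rfl }
  have hj : Function.Injective j := fun f g h => by
    ext v
    exact congrFun (congrArg (fun k : V q e →ₗ[F] V q e => (k : V q e → V q e)) h) v
  exact FiniteDimensional.of_injective j hj

lemma key_comm (f : Module.End Aᵐᵒᵖ (V q e))
    (hL : ∀ (l : L) (v : V q e), f (l • v) = l • f v) (g : Module.End L (V q e)) (v : V q e) :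
    f (g v) = g (f v) := by
  have key : ∀ t : L ⊗[F] A, ∀ v : V q e,
      f (Matrix.toLinAlgEquiv' ((e t)ᵀ) v) = Matrix.toLinAlgEquiv' ((e t)ᵀ) (f v) := by
    intro t
    induction t using TensorProduct.induction_on with
    | zero => intro v; simp; exact f.map_zero
    | tmul l a =>
      intro v
      have h1 : (e (l ⊗ₜ a))ᵀ = l • chi q e (MulOpposite.op a) := by
        rw [chi_apply, MulOpposite.unop_op]
        have : (l ⊗ₜ a : L ⊗[F] A) = l • ((1 : L) ⊗ₜ a) := by
          rw [TensorProduct.smul_tmul', smul_eq_mul, mul_one]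
        rw [this, _root_.map_smul, Matrix.transpose_smul]
      have h2 : ∀ w : V q e, Matrix.toLinAlgEquiv' ((e (l ⊗ₜ a))ᵀ) w
          = l • ((MulOpposite.op a : Aᵐᵒᵖ) • w) := by
        intro w
        rw [h1, _root_.map_smul, smul_defV']
        rfl
      rw [h2, h2, hL, f.map_smul]
    | add x y hx hy =>
      intro v
      rw [map_add, Matrix.transpose_add, map_add]
      exact (f.map_add _ _).trans (congrArg₂ (· + ·) (hx v) (hy v))
  have hg : g = Matrix.toLinAlgEquiv'
      ((e (e.symm ((Matrix.toLinAlgEquiv'.symm g)ᵀ)))ᵀ) := by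
    rw [AlgEquiv.apply_symm_apply, Matrix.transpose_transpose]
    exact (Matrix.toLinAlgEquiv'.apply_symm_apply _).symm
  conv_lhs => rw [hg]
  conv_rhs => rw [hg]
  exact key _ v

theorem centralizer_eq (hq : 0 < q) :
    Subalgebra.centralizer F (Set.range ⇑(iota q e)) = (iota q e).range := by
  apply le_antisymm
  · intro f hf
    rw [Subalgebra.mem_centralizer_iff] at hf
    have hL : ∀ (l : L) (v : V q e), f (l • v) = l • f v := by
      intro l v
      have := congrArg (fun k : Module.End Aᵐᵒᵖ (V q e) => k v)
        (hf (iota q e l) ⟨l, rfl⟩)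
      simpa [Module.End.mul_apply, iota_apply] using this.symm
    set i0 : Fin q := ⟨0, hq⟩ with hi0
    have single_comm : ∀ (k l : Fin q) (v : V q e),
        f (show V q e from Pi.single k ((v : Fin q → L) l)) =
          Pi.single k (((f v : Fin q → L)) l) := by
      intro k l v
      let g : Module.End L (V q e) :=
        { toFun := fun w => (Pi.single k ((w : Fin q → L) l) : Fin q → L)
          map_add' := fun w₁ w₂ => by
            show (Pi.single k _ : Fin q → L) = _
            exact Pi.single_add k _ _
          map_smul' := fun c w => by
            show (Pi.single k _ : Fin q → L) = c • (Pi.single k _ : Fin q → L)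
            exact Pi.single_smul k c _ }
      exact key_comm q e f hL g v
    set c : L := (f (show V q e from Pi.single i0 (1 : L)) : Fin q → L) i0 with hc
    have h1 : ∀ k : Fin q, f (show V q e from Pi.single k (1 : L)) =
        (Pi.single k c : Fin q → L) := by
      intro k
      have := single_comm k i0 (show V q e from Pi.single i0 (1 : L))
      simpa [Pi.single_eq_same] using this
    refine ⟨c, ?_⟩
    ext v
    show c • v = f v
    have hv : v = ∑ l : Fin q, (show V q e from Pi.single l ((v : Fin q → L) l)) := by
      exact (Finset.univ_sum_single (v : Fin q → L)).symm
    conv_rhs => rw [hv]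
    rw [map_sum]
    have h2 : ∀ l : Fin q, f (show V q e from Pi.single l ((v : Fin q → L) l)) =
        ((v : Fin q → L) l) • (Pi.single l c : Fin q → L) := by
      intro l
      have : (show V q e from Pi.single l ((v : Fin q → L) l)) =
          ((v : Fin q → L) l) • (show V q e from Pi.single l (1 : L)) := by
        show (Pi.single l _ : Fin q → L) = _
        have h5 := Pi.single_smul' l ((v : Fin q → L) l) (1 : L)
        rw [smul_eq_mul, mul_one] at h5
        exact h5
      rw [this, hL, h1]
      rfl
    rw [Finset.sum_congr rfl fun l _ => h2 l]
    show (c • v : Fin q → L) = _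
    funext j
    refine (show c * (v : Fin q → L) j = _ from ?_).trans
      (Finset.sum_apply j Finset.univ (fun l => ((v : Fin q → L) l • (Pi.single l c : Fin q → L)))).symm
    have h3 : ∀ l : Fin q, (((v : Fin q → L) l • (Pi.single l c : Fin q → L)) : Fin q → L) j
        = (v : Fin q → L) l * (Pi.single l c : Fin q → L) j := fun l => rfl
    simp only [h3, Pi.single_apply, mul_ite, mul_zero, Finset.sum_ite_eq, Finset.sum_ite_eq',
      Finset.mem_univ, if_true]
    show c * (v : Fin q → L) j = _
    exact mul_comm _ _
  · rintro x ⟨l, rfl⟩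
    rw [Subalgebra.mem_centralizer_iff]
    rintro y ⟨l', rfl⟩
    ext v
    show l' • (l • v) = l • (l' • v)
    rw [smul_comm]

end Constr



section Constr

variable {F : Type u} {A : Type v} {L : Type w} [Field F]
  [Ring A] [Algebra F A] [Field L] [Algebra F L]

variable {ι : Type*} [Fintype ι] [DecidableEq ι]

/-- `L ⊗[F] A ≃ₗ[F] (ι → A)` from a basis of `L`. -/
noncomputable def u3 (b : Module.Basis ι F L) : L ⊗[F] A ≃ₗ[F] (ι → A) := by
  refine LinearEquiv.ofLinear
    (TensorProduct.lift (LinearMap.mk₂ F (fun l a i => b.equivFun l i • a)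
      (fun l l' a => by funext i; simp [add_smul])
      (fun c l a => by funext i; simp [smul_smul])
      (fun l a a' => by funext i; simp [smul_add])
      (fun c l a => by funext i; exact smul_comm _ _ _)))
    (∑ i : ι, (TensorProduct.mk F L A (b i)).comp (LinearMap.proj i))
    ?_ ?_
  · refine LinearMap.ext fun x => ?_
    funext j
    have h0 : (∑ i : ι, (TensorProduct.mk F L A) (b i) ∘ₗ LinearMap.proj i) x
        = ∑ i : ι, b i ⊗ₜ[F] x i := by
      simp [LinearMap.sum_apply]
    rw [LinearMap.comp_apply, LinearMap.id_apply, h0, map_sum, Finset.sum_apply]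
    simp only [TensorProduct.lift.tmul, LinearMap.mk₂_apply]
    simp [Module.Basis.equivFun_self, Pi.single_apply, ite_smul]
  · refine TensorProduct.ext' fun l a => ?_
    rw [LinearMap.comp_apply, LinearMap.id_apply, TensorProduct.lift.tmul]
    have h0 : (∑ i : ι, (TensorProduct.mk F L A) (b i) ∘ₗ LinearMap.proj i)
        ((LinearMap.mk₂ F (fun l a i => b.equivFun l i • a)
          (by intros; funext i; simp [add_smul]) (by intros; funext i; simp [smul_smul])
          (by intros; funext i; simp [smul_add]) (by intros; funext i; exact smul_comm _ _ _)) l a)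
        = ∑ i : ι, b i ⊗ₜ[F] (b.equivFun l i • a) := by
      simp [LinearMap.sum_apply]
    rw [h0]
    have h1 : ∀ i : ι, (b i) ⊗ₜ[F] (b.equivFun l i • a) = (b.equivFun l i • b i) ⊗ₜ[F] a := by
      intro i
      rw [TensorProduct.tmul_smul, TensorProduct.smul_tmul']
    rw [Finset.sum_congr rfl fun i _ => h1 i, ← TensorProduct.sum_tmul, Module.Basis.sum_equivFun]

lemma u3_apply (b : Module.Basis ι F L) (l : L) (a : A) (i : ι) :
    u3 b (l ⊗ₜ a) i = b.equivFun l i • a := rfl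

lemma u3_mul (b : Module.Basis ι F L) (t : L ⊗[F] A) (a : A) :
    u3 b (t * (1 ⊗ₜ a)) = fun i => u3 b t i * a := by
  induction t using TensorProduct.induction_on with
  | zero => funext i; simp
  | tmul l a₀ =>
    funext i
    show u3 b ((l ⊗ₜ a₀) * (1 ⊗ₜ a)) i = u3 b (l ⊗ₜ a₀) i * a
    rw [Algebra.TensorProduct.tmul_mul_tmul, mul_one, u3_apply, u3_apply, smul_mul_assoc]
  | add x y hx hy =>
    funext i
    show u3 b ((x + y) * (1 ⊗ₜ a)) i = u3 b (x + y) i * a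
    rw [add_mul, map_add, map_add]
    simp only [Pi.add_apply]
    rw [congrFun hx i, congrFun hy i, add_mul]

end Constr

section Conj
variable (F : Type*) [CommSemiring F]

/-- Conjugation by an equivariant additive equivalence as `F`-algebra equivalence of
endomorphism algebras. -/
def endConj {S X Y : Type*} [Ring S] [AddCommGroup X] [AddCommGroup Y] [Module S X] [Module S Y]
    [Module F X] [Module F Y] [SMulCommClass S F X] [SMul F S] [IsScalarTower F S X]
    [SMulCommClass S F Y] [IsScalarTower F S Y]
    (u : X ≃ₗ[S] Y) (hu : ∀ (c : F) (x : X), u (c • x) = c • u x) :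
    Module.End S X ≃ₐ[F] Module.End S Y where
  toFun f := (u : X →ₗ[S] Y) ∘ₗ f ∘ₗ (u.symm : Y →ₗ[S] X)
  invFun g := (u.symm : Y →ₗ[S] X) ∘ₗ g ∘ₗ (u : X →ₗ[S] Y)
  left_inv f := by ext x; simp
  right_inv g := by ext y; simp
  map_mul' f g := by ext x; simp [Module.End.mul_apply]
  map_add' f g := by ext x; simp
  commutes' c := by
    refine LinearMap.ext fun y => ?_
    show u ((algebraMap F (Module.End S X) c) (u.symm y)) = (algebraMap F (Module.End S Y) c) y
    rw [Module.algebraMap_end_eq_smul_id, Module.algebraMap_end_eq_smul_id]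
    simp only [LinearMap.smul_apply, LinearMap.id_apply]
    rw [hu]
    simp

end Conj

section ASide

variable {F : Type u} {A : Type v} [Field F] [Ring A] [Algebra F A]

instance : IsScalarTower F Aᵐᵒᵖ A := by
  constructor
  intro f x a
  show a * ((f • x).unop) = f • (a * x.unop)
  rw [MulOpposite.unop_smul, mul_smul_comm]

instance : SMulCommClass Aᵐᵒᵖ F A := by
  constructor
  intro x f a
  show (f • a) * x.unop = f • (a * x.unop)
  rw [smul_mul_assoc]

/-- Left multiplication gives `A ≃ₐ[F] End_{Aᵐᵒᵖ}(A)`. -/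
noncomputable def endSelfOp : A ≃ₐ[F] Module.End Aᵐᵒᵖ A :=
  AlgEquiv.ofRingEquiv (f := RingEquiv.moduleEndSelfOp A) (fun f => by
    ext
    show algebraMap F A f * 1 = f • (1 : A)
    rw [mul_one, Algebra.algebraMap_eq_smul_one])

lemma endSelfOp_apply (a b : A) : (endSelfOp (F := F) a) b = a * b := rfl

end ASide

section Theta

variable {F : Type u} {A : Type v} {L : Type w} [Field F]
  [Ring A] [Algebra F A] [Field L] [Algebra F L]
variable (q : ℕ) (e : (L ⊗[F] A) ≃ₐ[L] Matrix (Fin q) (Fin q) L)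

/-- columns identification `(V)^q ≃ M_q(L)`. -/
def u1 : (Fin q → V q e) ≃ₗ[F] Matrix (Fin q) (Fin q) L where
  toFun v := Matrix.of fun i k => (v k : Fin q → L) i
  map_add' v w := by ext i k; rfl
  map_smul' c v := by ext i k; rfl
  invFun M := fun k => (show V q e from fun i => M i k)
  left_inv v := by funext k; rfl
  right_inv M := by ext i k; rfl

lemma u1_smul (x : Aᵐᵒᵖ) (v : Fin q → V q e) :
    u1 q e (x • v) = chi q e x * u1 q e v := by
  ext i k
  show ((chi q e x).mulVec ((v k : Fin q → L))) i = _
  simp [Matrix.mul_apply, Matrix.mulVec, dotProduct, u1]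
  rfl

/-- `M_q(L) ≃ L ⊗ A` via transpose and `e.symm`. -/
noncomputable def u2 : Matrix (Fin q) (Fin q) L ≃ₗ[F] L ⊗[F] A :=
  (Matrix.transposeLinearEquiv (Fin q) (Fin q) F L).trans
    ((e.symm.toLinearEquiv).restrictScalars F)

lemma u2_apply (M : Matrix (Fin q) (Fin q) L) : u2 q e M = e.symm Mᵀ := rfl

lemma u2_mul (x : Aᵐᵒᵖ) (M : Matrix (Fin q) (Fin q) L) :
    u2 q e (chi q e x * M) = u2 q e M * (1 ⊗ₜ x.unop) := by
  rw [u2_apply, u2_apply, Matrix.transpose_mul, chi_apply, Matrix.transpose_transpose,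
    _root_.map_mul, e.symm_apply_apply]

variable {ι : Type*} [Fintype ι] [DecidableEq ι] (b : Module.Basis ι F L)

/-- the composite `F`-linear equivalence `V^q ≃ (ι → A)`. -/
noncomputable def uF : (Fin q → V q e) ≃ₗ[F] (ι → A) :=
  (u1 q e).trans ((u2 q e).trans (u3 b))

lemma uF_smul (x : Aᵐᵒᵖ) (v : Fin q → V q e) :
    uF q e b (x • v) = x • uF q e b v := by
  show u3 b (u2 q e (u1 q e (x • v))) = x • u3 b (u2 q e (u1 q e v))
  rw [u1_smul, u2_mul, u3_mul]
  funext i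
  show u3 b (u2 q e (u1 q e v)) i * x.unop = (x • u3 b (u2 q e (u1 q e v))) i
  rfl

/-- the `Aᵐᵒᵖ`-linear version of `uF`. -/
noncomputable def uA : (Fin q → V q e) ≃ₗ[Aᵐᵒᵖ] (ι → A) :=
  LinearEquiv.mk ⟨⟨(uF q e b : (Fin q → V q e) → (ι → A)), (uF q e b).map_add⟩, uF_smul q e b⟩
    (uF q e b).symm (uF q e b).left_inv (uF q e b).right_inv

lemma uA_coe (v : Fin q → V q e) : uA q e b v = uF q e b v := rfl

/-- The fundamental isomorphism `M_q(End_{Aᵐᵒᵖ} V) ≅ M_d(A)`. -/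
noncomputable def theta :
    Matrix (Fin q) (Fin q) (Module.End Aᵐᵒᵖ (V q e)) ≃ₐ[F] Matrix ι ι A :=
  (endVecAlgEquivMatrixEnd (Fin q) F Aᵐᵒᵖ (V q e)).symm.trans
    ((endConj F (uA q e b) (fun c x => (uF q e b).map_smul c x)).trans
      ((endVecAlgEquivMatrixEnd ι F Aᵐᵒᵖ A).trans
        ((endSelfOp (F := F) (A := A)).symm.mapMatrix)))

end Theta

section Final

variable {F : Type u} {A : Type v} {L : Type w} [Field F]
  [Ring A] [Algebra F A] [Field L] [Algebra F L]

noncomputable def liftE (B₀ : Type w) [Ring B₀] [Algebra F B₀] : ULift.{v} B₀ ≃ₐ[F] B₀ :=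
  AlgEquiv.ofRingEquiv (f := ULift.ringEquiv) (fun f => rfl)

theorem main_construction [FiniteDimensional F A] [Nontrivial A]
    [Algebra.IsCentral F A] [IsSimpleRing A] [FiniteDimensional F L]
    (q : ℕ) (hq : 0 < q) (e : (L ⊗[F] A) ≃ₐ[L] Matrix (Fin q) (Fin q) L) :
    ∃ (B : Type (max v w)) (_ : Ring B) (_ : Algebra F B),
      Nontrivial B ∧ FiniteDimensional F B ∧
      Algebra.IsCentral F B ∧ IsSimpleRing B ∧
      (∃ m n : ℕ, 0 < m ∧ 0 < n ∧
        Nonempty (Matrix (Fin m) (Fin m) B ≃ₐ[F] Matrix (Fin n) (Fin n) A)) ∧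
      Module.finrank F B = (Module.finrank F L) ^ 2 ∧
      ∃ ι : L →ₐ[F] B, Function.Injective ι ∧
        Subalgebra.centralizer F (ι.range : Set B) = ι.range := by
  classical
  set d : ℕ := Module.finrank F L with hd
  have hd0 : 0 < d := Module.finrank_pos
  haveI : Nonempty (Fin d) := ⟨⟨0, hd0⟩⟩
  haveI : Nonempty (Fin q) := ⟨⟨0, hq⟩⟩
  let b : Module.Basis (Fin d) F L := Module.finBasis F L
  let B₀ := Module.End Aᵐᵒᵖ (V q e)
  let Θ : Matrix (Fin q) (Fin q) B₀ ≃ₐ[F] Matrix (Fin d) (Fin d) A := theta q e b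
  haveI hBnt : Nontrivial B₀ := B0_nontrivial q e hq
  haveI hBfd : FiniteDimensional F B₀ := B0_finiteDimensional q e
  haveI : IsSimpleRing (Matrix (Fin q) (Fin q) B₀) :=
    mySimple_of_ringEquiv Θ.symm.toRingEquiv
  haveI hBsimp : IsSimpleRing B₀ := mySimple_of_matrix (n := Fin q)
  haveI : Algebra.IsCentral F (Matrix (Fin q) (Fin q) B₀) := myCentral_of_algEquiv Θ.symm
  haveI hBcent : Algebra.IsCentral F B₀ := myCentral_of_matrix (n := Fin q)
  -- dimension count
  have hA : Module.finrank F A = q * q := by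
    have h1 : Module.finrank L (L ⊗[F] A) = Module.finrank F A := Module.finrank_baseChange
    have h2 : Module.finrank L (L ⊗[F] A)
        = Module.finrank L (Matrix (Fin q) (Fin q) L) := e.toLinearEquiv.finrank_eq
    have h3 : Module.finrank L (Matrix (Fin q) (Fin q) L) = q * q := by
      simp [Module.finrank_matrix]
    omega
  have hB : Module.finrank F B₀ = d ^ 2 := by
    have h1 : Module.finrank F (Matrix (Fin q) (Fin q) B₀)
        = Module.finrank F (Matrix (Fin d) (Fin d) A) := Θ.toLinearEquiv.finrank_eq
    rw [Module.finrank_matrix, Module.finrank_matrix] at h1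
    simp only [Fintype.card_fin, hA] at h1
    have : q * q * Module.finrank F B₀ = q * q * d ^ 2 := by ring_nf; ring_nf at h1; omega
    have hq2 : 0 < q * q := Nat.mul_pos hq hq
    exact Nat.eq_of_mul_eq_mul_left hq2 this
  -- assemble
  let g : ULift.{v} B₀ ≃ₐ[F] B₀ := liftE B₀
  refine ⟨ULift.{v} B₀, inferInstance, inferInstance, ?_, ?_, ?_, ?_, ?_, ?_, ?_⟩
  · exact g.toEquiv.nontrivial
  · exact LinearEquiv.finiteDimensional g.symm.toLinearEquiv
  · exact myCentral_of_algEquiv g.symm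
  · exact mySimple_of_ringEquiv g.symm.toRingEquiv
  · exact ⟨q, d, hq, hd0, ⟨g.mapMatrix.trans Θ⟩⟩
  · rw [← hB]
    exact g.toLinearEquiv.finrank_eq
  · refine ⟨g.symm.toAlgHom.comp (iota q e), ?_, ?_⟩
    · exact g.symm.injective.comp (iota q e).toRingHom.injective
    · set ι : L →ₐ[F] ULift.{v} B₀ := g.symm.toAlgHom.comp (iota q e) with hι
      have hgl : ∀ l : L, g (ι l) = iota q e l := fun l => g.apply_symm_apply _
      ext x
      constructor
      · intro hx
        rw [Subalgebra.mem_centralizer_iff] at hx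
        have hgx : g x ∈ Subalgebra.centralizer F (Set.range ⇑(iota q e)) := by
          rw [Subalgebra.mem_centralizer_iff]
          rintro _ ⟨l, rfl⟩
          have h1 : ι l * x = x * ι l := hx (ι l) (by simp [hι])
          have := congrArg g (congrArg (fun y => y) h1)
          calc iota q e l * g x = g (ι l) * g x := by rw [hgl]
            _ = g (ι l * x) := (map_mul g _ _).symm
            _ = g (x * ι l) := by rw [h1]
            _ = g x * g (ι l) := map_mul g _ _
            _ = g x * iota q e l := by rw [hgl]
        rw [centralizer_eq q e hq] at hgx
        obtain ⟨l, hl⟩ := hgx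
        refine ⟨l, ?_⟩
        have : g (ι l) = g x := by rw [hgl]; exact hl
        exact g.injective this
      · rintro ⟨l, rfl⟩
        rw [Subalgebra.mem_centralizer_iff]
        rintro y hy
        rw [SetLike.mem_coe, AlgHom.mem_range] at hy
        obtain ⟨l', rfl⟩ := hy
        show ι l' * ι l = ι l * ι l'
        rw [← _root_.map_mul, ← _root_.map_mul, mul_comm]

end Final

/-- If a finite field extension `L` of `F` splits the central simple `F`-algebra
`A`, then there is a central simple `F`-algebra `B`, Brauer equivalent to `A`,
with `dim_F B = (dim_F L)²`, containing (an isomorphic copy of) `L` as a maximal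
commutative subalgebra. -/
theorem exists_brauer_equivalent_with_maximal_subfield
    (F : Type u) (A : Type v) (L : Type w) [Field F]
    [Ring A] [Algebra F A] [FiniteDimensional F A] [Nontrivial A]
    [Algebra.IsCentral F A] [IsSimpleRing A]
    [Field L] [Algebra F L] [FiniteDimensional F L]
    (q : ℕ) (hq : 0 < q)
    (hsplit : Nonempty ((L ⊗[F] A) ≃ₐ[L] Matrix (Fin q) (Fin q) L)) :
    ∃ (B : Type (max v w)) (_ : Ring B) (_ : Algebra F B),
      Nontrivial B ∧ FiniteDimensional F B ∧
      Algebra.IsCentral F B ∧ IsSimpleRing B ∧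
      (∃ m n : ℕ, 0 < m ∧ 0 < n ∧
        Nonempty (Matrix (Fin m) (Fin m) B ≃ₐ[F] Matrix (Fin n) (Fin n) A)) ∧
      Module.finrank F B = (Module.finrank F L) ^ 2 ∧
      ∃ ι : L →ₐ[F] B, Function.Injective ι ∧
        Subalgebra.centralizer F (ι.range : Set B) = ι.range := by
  obtain ⟨e⟩ := hsplit
  exact main_construction q hq e
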